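/- Let n ≥ 1 and 1 ≤ k ≤ n be integers and let s̃ ≥ √n be such that h := n/s̃ and ℓ := k/h are positive integers with √k ≥ h. Let λ = [s̃^h] be the rectangular Young diagram with h rows of length s̃ and let μ = [ℓ^h] ⊆ λ be the rectangle with h rows of length ℓ. Then d_{λ\μ}/d_λ ≥ (2e)^{−k} · (s(λ)/n)^k. -/

import Mathlib

set_option maxHeartbeats 1000000


open scoped BigOperators

namespace ThickHookPaper

/-- The diagonal length `δ(λ)` of a Young diagram: the number of diagonal boxes `(i,i)` in `λ`. -/
def diagLen (l : YoungDiagram) : ℕ := (l.cells.filter (fun u => u.1 = u.2)).card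

/-- The maximal hook length `s(λ) = λ₁ + λ₁' - 1` of a Young diagram. -/
def maxHook (l : YoungDiagram) : ℕ := l.rowLen 0 + l.colLen 0 - 1

/-- The hook length of the box `u = (i, j)` in `λ`. -/
def hook (l : YoungDiagram) (u : ℕ × ℕ) : ℕ :=
  (l.rowLen u.1 - u.2) + (l.colLen u.2 - u.1) - 1

/-- The number of standard tableaux of the skew shape `λ \ μ`, defined as the number of
saturated chains of Young diagrams from `μ` to `λ` (each step adding exactly one box). -/
noncomputable def skewSYT (μ l : YoungDiagram) : ℕ :=
  Nat.card {f : Fin (l.card - μ.card + 1) → YoungDiagram //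
    f 0 = μ ∧ f (Fin.last _) = l ∧
    ∀ i : Fin (l.card - μ.card),
      f i.castSucc ≤ f i.succ ∧ (f i.succ).card = (f i.castSucc).card + 1}

/-- The number of standard Young tableaux of shape `λ`, i.e. the dimension `d_λ`. -/
noncomputable def dim (l : YoungDiagram) : ℕ := skewSYT ⊥ l

/-! ### Ribbons and the Murnaghan--Nakayama character -/

/-- Two boxes are adjacent if they share an edge. -/
def Adj (u v : ℕ × ℕ) : Prop :=
  (u.1 = v.1 ∧ (u.2 + 1 = v.2 ∨ v.2 + 1 = u.2)) ∨
    (u.2 = v.2 ∧ (u.1 + 1 = v.1 ∨ v.1 + 1 = u.1))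

/-- A finite set of boxes is connected if any two of its boxes are linked by a path of
adjacent boxes inside the set. -/
def ConnectedCells (c : Finset (ℕ × ℕ)) : Prop :=
  ∀ u ∈ c, ∀ v ∈ c, Relation.ReflTransGen (fun x y => x ∈ c ∧ y ∈ c ∧ Adj x y) u v

/-- A set of boxes contains no `2 × 2` square. -/
def No2x2 (c : Finset (ℕ × ℕ)) : Prop :=
  ∀ i j : ℕ, ¬ ((i, j) ∈ c ∧ (i + 1, j) ∈ c ∧ (i, j + 1) ∈ c ∧ (i + 1, j + 1) ∈ c)

/-- `IsRibbon μ l` : the skew diagram `l \ μ` is a ribbon (nonempty, connected, no 2×2 square). -/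
def IsRibbon (μ l : YoungDiagram) : Prop :=
  μ ≤ l ∧ (l.cells \ μ.cells).Nonempty ∧ ConnectedCells (l.cells \ μ.cells) ∧
    No2x2 (l.cells \ μ.cells)

/-- The height of a set of boxes: the difference between the largest and smallest
row indices occurring in it. -/
noncomputable def cellsHeight (c : Finset (ℕ × ℕ)) : ℕ :=
  c.sup Prod.fst - sInf (Prod.fst '' (c : Set (ℕ × ℕ)))

/-- `IsRibbonTableau l α f` : `f` is a ribbon tableau of shape `l` and weight `α`, i.e. a
chain `⊥ = f 0 ⊆ f 1 ⊆ ... ⊆ f N = l` where each successive skew diagram is a ribbon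
with `α i` boxes. -/
def IsRibbonTableau (l : YoungDiagram) (α : List ℕ) (f : Fin (α.length + 1) → YoungDiagram) :
    Prop :=
  f 0 = ⊥ ∧ f (Fin.last _) = l ∧
  ∀ i : Fin α.length,
    IsRibbon (f i.castSucc) (f i.succ) ∧
      ((f i.succ).cells \ (f i.castSucc).cells).card = α.get i

/-- The total height of a ribbon tableau: the sum of the heights of its ribbons. -/
noncomputable def tabHeight (N : ℕ) (f : Fin (N + 1) → YoungDiagram) : ℕ :=
  ∑ i : Fin N, cellsHeight ((f i.succ).cells \ (f i.castSucc).cells)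

/-- The Murnaghan--Nakayama alternating sum over ribbon tableaux of shape `l` and weight `α`. -/
noncomputable def charMN (l : YoungDiagram) (α : List ℕ) : ℤ :=
  ∑ᶠ f ∈ {f : Fin (α.length + 1) → YoungDiagram | IsRibbonTableau l α f},
    (-1 : ℤ) ^ tabHeight α.length f

/-- The cycle type of a permutation including fixed points (as parts equal to `1`). -/
def fullCycleType {n : ℕ} (σ : Equiv.Perm (Fin n)) : Multiset ℕ :=
  σ.cycleType + Multiset.replicate (n - σ.support.card) 1

/-- The character `ch^λ(σ)` of the irreducible representation of `S_n` indexed by `λ ⊢ n`,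
defined via the Murnaghan--Nakayama rule. -/
noncomputable def charPerm (l : YoungDiagram) {n : ℕ} (σ : Equiv.Perm (Fin n)) : ℤ :=
  charMN l (fullCycleType σ).toList

/-- The total number of cycles of `σ`, fixed points counted as 1-cycles. -/
def cyc {n : ℕ} (σ : Equiv.Perm (Fin n)) : ℕ := Multiset.card (fullCycleType σ)

/-- `|σ|`: the minimal number of transpositions whose product is `σ`, which equals
`n` minus the number of cycles of `σ` (fixed points included). -/
def transLen {n : ℕ} (σ : Equiv.Perm (Fin n)) : ℕ := n - cyc σ

/-! ### Excited diagrams -/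

/-- The upper-right square of a box. -/
def URS (u : ℕ × ℕ) : Finset (ℕ × ℕ) :=
  {u, (u.1 + 1, u.2), (u.1, u.2 + 1), (u.1 + 1, u.2 + 1)}

/-- One simple excitation step: an excitable box of `E` is moved diagonally up-right. -/
def ExciteStep (l : YoungDiagram) (E E' : Finset (ℕ × ℕ)) : Prop :=
  ∃ u ∈ E, URS u ⊆ l.cells ∧ E ∩ URS u = {u} ∧
    E' = insert (u.1 + 1, u.2 + 1) (E.erase u)

/-- The set `𝓔(λ, μ)` of excited diagrams of `μ` in `λ`. -/
def Excited (l μ : YoungDiagram) : Set (Finset (ℕ × ℕ)) :=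
  {E | Relation.ReflTransGen (ExciteStep l) μ.cells E}

/-- The excited sum `S(λ, μ) = Σ_{E ∈ 𝓔(λ,μ)} Π_{u ∈ E} H(λ, u)`. -/
noncomputable def excitedSum (l μ : YoungDiagram) : ℕ :=
  ∑ᶠ E ∈ Excited l μ, ∏ u ∈ E, hook l u

/-! ### Rectangles, rows -/

/-- The rectangular Young diagram `[a^b]` with `b` rows of length `a`. -/
def rect (a b : ℕ) : YoungDiagram :=
  ⟨Finset.range b ×ˢ Finset.range a, by
    rintro ⟨i, j⟩ ⟨i', j'⟩ ⟨h1, h2⟩ hu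
    simp only [Finset.coe_product, Set.mem_prod, Finset.mem_coe, Finset.mem_range] at *
    exact ⟨lt_of_le_of_lt h1 hu.1, lt_of_le_of_lt h2 hu.2⟩⟩

/-- The one-row Young diagram `[ℓ]`. -/
def rowDiagram (ℓ : ℕ) : YoungDiagram := rect ℓ 1

/-! ### Thick hook decompositions -/

/-- The boxes of `λ` whose diagonal index `min i j` lies in `[lo, hi)`: this is the thick hook
`λ^{(lo+1) → hi}` in the (1-indexed) notation of the paper. -/
def thickHookCells (l : YoungDiagram) (lo hi : ℕ) : Finset (ℕ × ℕ) :=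
  l.cells.filter (fun u => lo ≤ min u.1 u.2 ∧ min u.1 u.2 < hi)

/-- An `(a, b)` thick hook decomposition of `λ`: diagonal indices
`0 = i_0 < i_1 < ... < i_p = δ(λ)` such that each thick hook
`T_j = λ^{(i_{j-1}+1) → i_j}` has between `a` and `b` boxes. -/
structure ThickHookDecomp (l : YoungDiagram) (a b : ℝ) where
  p : ℕ
  p_pos : 0 < p
  idx : ℕ → ℕ
  idx_zero : idx 0 = 0
  idx_last : idx p = diagLen l
  idx_strictMono : ∀ j < p, idx j < idx (j + 1)
  size_lb : ∀ j < p, a ≤ ((thickHookCells l (idx j) (idx (j + 1))).card : ℝ)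
  size_ub : ∀ j < p, ((thickHookCells l (idx j) (idx (j + 1))).card : ℝ) ≤ b

/-- The corners of a Young diagram: boxes `u ∈ λ` such that neither the box to the right
nor the box above (in the French convention: the next box in the row and in the column)
belongs to `λ`. -/
def corners (l : YoungDiagram) : Finset (ℕ × ℕ) :=
  l.cells.filter (fun u => (u.1, u.2 + 1) ∉ l ∧ (u.1 + 1, u.2) ∉ l)


/-! ### Module 0: corners, eraseCorner, row lengths -/

lemma yd_ext {μ ν : YoungDiagram} (h : μ.cells = ν.cells) : μ = ν := by
  cases μ; cases ν; simpa using h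

lemma mem_corners {l : YoungDiagram} {c : ℕ × ℕ} :
    c ∈ corners l ↔ c ∈ l ∧ (c.1, c.2 + 1) ∉ l ∧ (c.1 + 1, c.2) ∉ l := by
  simp [corners]

lemma corner_isLowerSet {l : YoungDiagram} {c : ℕ × ℕ} (hc : c ∈ corners l) :
    IsLowerSet (↑(l.cells.erase c) : Set (ℕ × ℕ)) := by
  obtain ⟨hcl, hr, hu⟩ := mem_corners.mp hc
  rintro ⟨xa, ya⟩ ⟨xb, yb⟩ ⟨h1, h2⟩ ha
  simp only [Finset.coe_erase, Set.mem_diff, Finset.mem_coe, Set.mem_singleton_iff,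
    YoungDiagram.mem_cells] at ha ⊢
  obtain ⟨hal, hane⟩ := ha
  simp only at h1 h2
  refine ⟨l.up_left_mem h1 h2 hal, ?_⟩
  rintro rfl
  rcases Nat.lt_or_ge xb xa with hx | hx
  · exact hu (l.up_left_mem hx h2 hal)
  · have hxe : xa = xb := le_antisymm hx h1
    rcases Nat.lt_or_ge yb ya with hy | hy
    · exact hr (l.up_left_mem h1 hy hal)
    · exact hane (by rw [hxe, le_antisymm hy h2])

noncomputable def eraseCorner (l : YoungDiagram) (c : ℕ × ℕ) : YoungDiagram :=
  if hc : c ∈ corners l then ⟨l.cells.erase c, corner_isLowerSet hc⟩ else l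

lemma eraseCorner_cells {l : YoungDiagram} {c : ℕ × ℕ} (hc : c ∈ corners l) :
    (eraseCorner l c).cells = l.cells.erase c := by
  simp [eraseCorner, hc]

lemma eraseCorner_le (l : YoungDiagram) (c : ℕ × ℕ) : eraseCorner l c ≤ l := by
  by_cases hc : c ∈ corners l
  · rw [← YoungDiagram.cells_subset_iff, eraseCorner_cells hc]
    exact Finset.erase_subset _ _
  · simp [eraseCorner, hc]

lemma eraseCorner_card {l : YoungDiagram} {c : ℕ × ℕ} (hc : c ∈ corners l) :
    l.card = (eraseCorner l c).card + 1 := by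
  have hcl : c ∈ l.cells := (mem_corners.mp hc).1
  have h0 : 0 < l.cells.card := Finset.card_pos.mpr ⟨c, hcl⟩
  show l.cells.card = (eraseCorner l c).cells.card + 1
  rw [eraseCorner_cells hc, Finset.card_erase_of_mem hcl]
  omega

lemma rowLen_eq {l : YoungDiagram} {i m : ℕ} (hm : ∀ k, (i, k) ∈ l ↔ k < m) :
    l.rowLen i = m := by
  rcases Nat.lt_trichotomy (l.rowLen i) m with h | h | h
  · exact absurd (YoungDiagram.mem_iff_lt_rowLen.mp ((hm _).mpr h)) (lt_irrefl _)
  · exact h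
  · exact absurd ((hm m).mp (YoungDiagram.mem_iff_lt_rowLen.mpr h)) (lt_irrefl _)

lemma corner_snd {l : YoungDiagram} {c : ℕ × ℕ} (hc : c ∈ corners l) :
    c.2 + 1 = l.rowLen c.1 := by
  obtain ⟨h1, h2, _⟩ := mem_corners.mp hc
  have ha : c.2 < l.rowLen c.1 := YoungDiagram.mem_iff_lt_rowLen.mp (by rwa [Prod.mk.eta])
  have hb : ¬ (c.2 + 1 < l.rowLen c.1) := fun hh => h2 (YoungDiagram.mem_iff_lt_rowLen.mpr hh)
  omega

lemma rowLen_eraseCorner {l : YoungDiagram} {c : ℕ × ℕ} (hc : c ∈ corners l) (i : ℕ) :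
    (eraseCorner l c).rowLen i = if i = c.1 then l.rowLen c.1 - 1 else l.rowLen i := by
  have hsnd := corner_snd hc
  apply rowLen_eq
  intro k
  have hmem : ((i, k) ∈ eraseCorner l c) ↔ ((i, k) ∈ l ∧ (i, k) ≠ c) := by
    rw [← YoungDiagram.mem_cells, eraseCorner_cells hc, Finset.mem_erase, and_comm,
      YoungDiagram.mem_cells]
  rw [hmem, YoungDiagram.mem_iff_lt_rowLen]
  by_cases h : i = c.1
  · subst h
    rw [if_pos rfl]
    constructor
    · rintro ⟨hk, hne⟩
      have : k ≠ c.2 := fun hh => hne (by rw [hh, Prod.mk.eta])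
      omega
    · intro hk
      refine ⟨by omega, fun he => ?_⟩
      have : k = c.2 := congrArg Prod.snd he
      omega
  · rw [if_neg h]
    constructor
    · exact fun hx => hx.1
    · intro hk
      exact ⟨hk, fun he => h (congrArg Prod.fst he)⟩

lemma mem_corners_iff_row {l : YoungDiagram} {i j : ℕ} :
    (i, j) ∈ corners l ↔ 0 < l.rowLen i ∧ j + 1 = l.rowLen i ∧ l.rowLen (i + 1) < l.rowLen i := by
  rw [mem_corners]
  simp only [YoungDiagram.mem_iff_lt_rowLen]
  constructor
  · rintro ⟨h1, h2, h3⟩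
    have h2' : ¬ (j + 1 < l.rowLen i) := h2
    have h3' : ¬ (j < l.rowLen (i + 1)) := h3
    omega
  · rintro ⟨h1, h2, h3⟩
    refine ⟨by omega, fun hh => by omega, fun hh => by omega⟩

lemma rowLen_eq_zero {l : YoungDiagram} {h i : ℕ} (hcol : l.colLen 0 ≤ h) (hi : h ≤ i) :
    l.rowLen i = 0 := by
  by_contra hne
  have h1 : (i, 0) ∈ l := YoungDiagram.mem_iff_lt_rowLen.mpr (by omega)
  have h2 := YoungDiagram.mem_iff_lt_colLen.mp h1
  omega

lemma colLen_le_of_le {l l' : YoungDiagram} (hle : l' ≤ l) (j : ℕ) :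
    l'.colLen j ≤ l.colLen j := by
  by_contra hlt
  have h1 : (l.colLen j, j) ∈ l' := YoungDiagram.mem_iff_lt_colLen.mpr (by omega)
  have h2 := YoungDiagram.mem_iff_lt_colLen.mp (hle h1)
  omega

lemma card_eq_sum_rowLen {l : YoungDiagram} {h : ℕ} (hcol : l.colLen 0 ≤ h) :
    l.card = ∑ i ∈ Finset.range h, l.rowLen i := by
  have hcells : l.cells = (Finset.range h).biUnion (fun i => l.row i) := by
    ext ⟨x, y⟩
    simp only [Finset.mem_biUnion, Finset.mem_range, YoungDiagram.mem_row_iff,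
      YoungDiagram.mem_cells]
    constructor
    · intro hmem
      have hx0 : (x, 0) ∈ l := l.up_left_mem (le_refl _) (Nat.zero_le _) hmem
      have := YoungDiagram.mem_iff_lt_colLen.mp hx0
      exact ⟨x, by omega, hmem, rfl⟩
    · rintro ⟨i, _, hm, rfl⟩
      exact hm
  have hdisj : ∀ a ∈ Finset.range h, ∀ b ∈ Finset.range h, a ≠ b →
      Disjoint (l.row a) (l.row b) := by
    intro a _ b _ hab
    rw [Finset.disjoint_left]
    intro x hxa hxb
    rw [YoungDiagram.mem_row_iff] at hxa hxb
    exact hab (hxa.2.symm.trans hxb.2)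
  calc l.card = l.cells.card := rfl
    _ = ∑ i ∈ Finset.range h, (l.row i).card := by rw [hcells, Finset.card_biUnion hdisj]
    _ = ∑ i ∈ Finset.range h, l.rowLen i := by
        exact Finset.sum_congr rfl (fun i _ => (l.rowLen_eq_card).symm)

/-! rect lemmas -/

lemma mem_rect {a b : ℕ} {c : ℕ × ℕ} : c ∈ rect a b ↔ c.1 < b ∧ c.2 < a := by
  obtain ⟨x, y⟩ := c
  show (x, y) ∈ (Finset.range b ×ˢ Finset.range a) ↔ _
  simp [Finset.mem_product]

lemma rect_card (a b : ℕ) : (rect a b).card = b * a := by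
  show (Finset.range b ×ˢ Finset.range a).card = b * a
  simp [Finset.card_product]

lemma rowLen_rect {a b i : ℕ} (hib : i < b) : (rect a b).rowLen i = a :=
  rowLen_eq (fun k => by simp [mem_rect, hib])

lemma colLen_rect {a b : ℕ} (ha : 0 < a) : (rect a b).colLen 0 = b := by
  rcases Nat.lt_trichotomy ((rect a b).colLen 0) b with h | h | h
  · have : (b - 1, 0) ∈ rect a b := mem_rect.mpr ⟨by omega, ha⟩
    have := YoungDiagram.mem_iff_lt_colLen.mp this
    rcases Nat.eq_zero_or_pos b with hb | hb
    · omega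
    · omega
  · exact h
  · have : (b, 0) ∈ rect a b := YoungDiagram.mem_iff_lt_colLen.mpr h
    have := (mem_rect.mp this).1
    omega

lemma rect_le_rect {a a' b : ℕ} (h : a ≤ a') : rect a b ≤ rect a' b := by
  intro c hc
  obtain ⟨h1, h2⟩ := mem_rect.mp hc
  exact mem_rect.mpr ⟨h1, by omega⟩

lemma rect_zero (h : ℕ) : rect 0 h = ⊥ := by
  apply yd_ext
  ext ⟨x, y⟩
  simp only [YoungDiagram.cells_bot, Finset.notMem_empty, iff_false]
  intro hx
  exact absurd (mem_rect.mp (YoungDiagram.mem_cells _ |>.mp hx)).2 (by omega)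

/-! ### Module 1: chain counting -/

def ChainProp (μ l : YoungDiagram) (N : ℕ) (f : Fin (N + 1) → YoungDiagram) : Prop :=
  f 0 = μ ∧ f (Fin.last _) = l ∧
    ∀ i : Fin N, f i.castSucc ≤ f i.succ ∧ (f i.succ).card = (f i.castSucc).card + 1

lemma skewSYT_eq (μ l : YoungDiagram) :
    skewSYT μ l = Nat.card {f : Fin (l.card - μ.card + 1) → YoungDiagram //
      ChainProp μ l (l.card - μ.card) f} := rfl

lemma fin_congr {α : Sort*} {n : ℕ} (f : Fin n → α) {i j : Fin n} (h : i.1 = j.1) : f i = f j :=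
  congrArg f (Fin.ext h)

lemma chain_le_add {N : ℕ} {f : Fin (N + 1) → YoungDiagram}
    (hstep : ∀ i : Fin N, f i.castSucc ≤ f i.succ ∧ (f i.succ).card = (f i.castSucc).card + 1) :
    ∀ (d a : ℕ) (h : a + d ≤ N), f ⟨a, by omega⟩ ≤ f ⟨a + d, by omega⟩ := by
  intro d
  induction d with
  | zero => intro a h; exact le_of_eq (fin_congr f rfl)
  | succ t ih =>
    intro a h
    refine le_trans (ih a (by omega)) ?_
    have hs := (hstep ⟨a + t, by omega⟩).1
    have e1 : f (Fin.castSucc ⟨a + t, by omega⟩) = f ⟨a + t, by omega⟩ :=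
      fin_congr f (by simp)
    have e2 : f (Fin.succ ⟨a + t, by omega⟩) = f ⟨a + (t + 1), by omega⟩ :=
      fin_congr f (by simp only [Fin.val_succ]; omega)
    rw [e1, e2] at hs
    exact hs

lemma chain_le {N : ℕ} {f : Fin (N + 1) → YoungDiagram}
    (hstep : ∀ i : Fin N, f i.castSucc ≤ f i.succ ∧ (f i.succ).card = (f i.castSucc).card + 1)
    {i j : Fin (N + 1)} (hij : i ≤ j) : f i ≤ f j := by
  have hv : i.1 ≤ j.1 := hij
  have hj := j.isLt
  have h := chain_le_add hstep (j.1 - i.1) i.1 (by omega)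
  have e1 : f ⟨i.1, by omega⟩ = f i := fin_congr f rfl
  have e2 : f ⟨i.1 + (j.1 - i.1), by omega⟩ = f j := fin_congr f (by show i.1 + (j.1 - i.1) = j.1; omega)
  rwa [e1, e2] at h

lemma chain_zero_le_last {N : ℕ} {f : Fin (N + 1) → YoungDiagram}
    (hstep : ∀ i : Fin N, f i.castSucc ≤ f i.succ ∧ (f i.succ).card = (f i.castSucc).card + 1) :
    f 0 ≤ f (Fin.last N) :=
  chain_le hstep (Fin.zero_le _)

instance chainFinite (μ l : YoungDiagram) (N : ℕ) :
    Finite {f : Fin (N + 1) → YoungDiagram // ChainProp μ l N f} := by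
  haveI : Finite {s : Finset (ℕ × ℕ) // s ⊆ l.cells} := by
    apply Finite.of_injective (β := {s // s ∈ l.cells.powerset})
      (fun s => ⟨s.1, Finset.mem_powerset.mpr s.2⟩)
    intro a b hab
    have h2 := congrArg Subtype.val hab
    exact Subtype.ext h2
  have hcells : ∀ (f : {f : Fin (N + 1) → YoungDiagram // ChainProp μ l N f}) (i : Fin (N + 1)),
      (f.1 i).cells ⊆ l.cells := by
    intro f i
    have h1 : f.1 i ≤ f.1 (Fin.last N) := chain_le f.2.2.2 (Fin.le_last i)
    rw [f.2.2.1] at h1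
    exact YoungDiagram.cells_subset_iff.mpr h1
  apply Finite.of_injective
    (β := Fin (N + 1) → {s : Finset (ℕ × ℕ) // s ⊆ l.cells})
    (fun f i => ⟨(f.1 i).cells ∩ l.cells, Finset.inter_subset_right⟩)
  intro f g hfg
  apply Subtype.ext; funext i
  have hthis := congrFun hfg i
  simp only [Subtype.mk.injEq] at hthis
  rw [Finset.inter_eq_left.mpr (hcells f i), Finset.inter_eq_left.mpr (hcells g i)] at hthis
  exact yd_ext hthis

lemma chainProp_card_self (l : YoungDiagram) (N : ℕ) (hN : N = 0) :
    Nat.card {f : Fin (N + 1) → YoungDiagram // ChainProp l l N f} = 1 := by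
  subst hN
  rw [Nat.card_eq_one_iff_unique]
  constructor
  · constructor
    rintro ⟨f, hf⟩ ⟨g, hg⟩
    apply Subtype.ext; funext i
    have hi : i = 0 := Fin.ext (by have := i.isLt; omega)
    show f i = g i
    rw [hi, hf.1, hg.1]
  · exact ⟨⟨fun _ => l, rfl, rfl, fun i => i.elim0⟩⟩

lemma skewSYT_self (l : YoungDiagram) : skewSYT l l = 1 := by
  rw [skewSYT_eq]
  exact chainProp_card_self l _ (Nat.sub_self _)

lemma skewSYT_of_not_le {μ l : YoungDiagram} (h : ¬ μ ≤ l) : skewSYT μ l = 0 := by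
  rw [skewSYT_eq]
  have : IsEmpty {f : Fin (l.card - μ.card + 1) → YoungDiagram //
      ChainProp μ l (l.card - μ.card) f} := by
    constructor
    rintro ⟨f, h0, hlast, hstep⟩
    apply h
    have h1 := chain_zero_le_last hstep
    rwa [h0, hlast] at h1
  exact Nat.card_of_isEmpty

/-- restriction of a chain -/
lemma chainProp_restrict {μ l l' : YoungDiagram} {M : ℕ}
    {f : Fin (M + 2) → YoungDiagram} (hf : ChainProp μ l (M + 1) f)
    (hpen : f ⟨M, by omega⟩ = l') :
    ChainProp μ l' M (fun i => f (Fin.castLE (by omega) i)) := by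
  obtain ⟨h0, hlast, hstep⟩ := hf
  refine ⟨?_, ?_, ?_⟩
  · rw [← h0]; exact fin_congr f (by simp)
  · rw [← hpen]; exact fin_congr f (by simp)
  · intro i
    have hi := i.isLt
    have hs := hstep ⟨i.1, by omega⟩
    have e1 : f (Fin.castSucc ⟨i.1, by omega⟩)
        = f (Fin.castLE (by omega) (Fin.castSucc i)) := fin_congr f (by simp)
    have e2 : f (Fin.succ ⟨i.1, by omega⟩)
        = f (Fin.castLE (by omega) (Fin.succ i)) := fin_congr f (by simp)
    rw [e1, e2] at hs
    exact hs

noncomputable def extendChain (l : YoungDiagram) {M : ℕ} (f : Fin (M + 1) → YoungDiagram) :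
    Fin (M + 2) → YoungDiagram :=
  fun i => if h : (i.1 : ℕ) < M + 1 then f ⟨i.1, h⟩ else l

lemma extendChain_lt {l : YoungDiagram} {M : ℕ} {f : Fin (M + 1) → YoungDiagram}
    {i : Fin (M + 2)} (hi : i.1 < M + 1) : extendChain l f i = f ⟨i.1, hi⟩ := by
  simp only [extendChain, dif_pos hi]

lemma extendChain_last {l : YoungDiagram} {M : ℕ} {f : Fin (M + 1) → YoungDiagram}
    {i : Fin (M + 2)} (hi : ¬ (i.1 < M + 1)) : extendChain l f i = l := by
  simp only [extendChain, dif_neg hi]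

lemma chainProp_extend {μ l l' : YoungDiagram} {M : ℕ} {f : Fin (M + 1) → YoungDiagram}
    (hf : ChainProp μ l' M f) (hle : l' ≤ l) (hcard : l.card = l'.card + 1) :
    ChainProp μ l (M + 1) (extendChain l f) := by
  obtain ⟨h0, hlast, hstep⟩ := hf
  refine ⟨?_, ?_, ?_⟩
  · rw [extendChain_lt (by simp)]
    rw [← h0]; exact fin_congr f (by simp)
  · exact extendChain_last (by simp)
  · intro i
    have hi := i.isLt
    by_cases h2 : i.1 + 1 < M + 1
    · have hia : i.1 < M := by omega
      have hc1 : (Fin.castSucc i).1 < M + 1 := by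
        simp only [Fin.coe_castSucc]; omega
      have hc2 : (Fin.succ i).1 < M + 1 := by
        simp only [Fin.val_succ]; omega
      have e1 : extendChain l f (Fin.castSucc i) = f ⟨i.1, by omega⟩ := by
        rw [extendChain_lt hc1]
        exact fin_congr f rfl
      have e2 : extendChain l f (Fin.succ i) = f ⟨i.1 + 1, by omega⟩ := by
        rw [extendChain_lt hc2]
        exact fin_congr f rfl
      rw [e1, e2]
      have hs := hstep ⟨i.1, hia⟩
      have e3 : f (Fin.castSucc ⟨i.1, hia⟩) = f ⟨i.1, by omega⟩ := fin_congr f rfl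
      have e4 : f (Fin.succ ⟨i.1, hia⟩) = f ⟨i.1 + 1, by omega⟩ := fin_congr f rfl
      rw [e3, e4] at hs
      exact hs
    · have hieq : i.1 = M := by omega
      have hc1 : (Fin.castSucc i).1 < M + 1 := by
        simp only [Fin.coe_castSucc]; omega
      have hc2 : ¬ ((Fin.succ i).1 < M + 1) := by
        simp only [Fin.val_succ]; omega
      have e1 : extendChain l f (Fin.castSucc i) = f (Fin.last M) := by
        rw [extendChain_lt hc1]
        exact fin_congr f (by simp only [Fin.coe_castSucc, Fin.val_last]; omega)
      have e2 : extendChain l f (Fin.succ i) = l := extendChain_last hc2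
      rw [e1, e2, hlast]
      exact ⟨hle, hcard⟩

lemma chain_pen_structure {μ l : YoungDiagram} {M : ℕ}
    (f : Fin (M + 2) → YoungDiagram) (hf : ChainProp μ l (M + 1) f) :
    ∃ c, c ∈ corners l ∧ f ⟨M, by omega⟩ = eraseCorner l c := by
  obtain ⟨h0, hlast, hstep⟩ := hf
  set p := f ⟨M, by omega⟩ with hp
  have hstep' := hstep ⟨M, by omega⟩
  have e1 : f (Fin.castSucc ⟨M, by omega⟩) = p := fin_congr f (by simp)
  have e2 : f (Fin.succ ⟨M, by omega⟩) = f (Fin.last (M + 1)) := fin_congr f (by simp)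
  rw [e1, e2, hlast] at hstep'
  obtain ⟨hpl, hpcard⟩ := hstep'
  have hsub : p.cells ⊆ l.cells := YoungDiagram.cells_subset_iff.mpr hpl
  have hcard1 : (l.cells \ p.cells).card = 1 := by
    rw [Finset.card_sdiff_of_subset hsub]
    show l.cells.card - p.cells.card = 1
    have : l.cells.card = p.cells.card + 1 := hpcard
    omega
  obtain ⟨c, hc⟩ := Finset.card_eq_one.mp hcard1
  have hcl : c ∈ l.cells ∧ c ∉ p.cells := by
    have : c ∈ l.cells \ p.cells := hc ▸ Finset.mem_singleton_self c
    simpa [Finset.mem_sdiff] using this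
  have hpcells : p.cells = l.cells.erase c := by
    ext x
    rw [Finset.mem_erase]
    constructor
    · intro hx
      exact ⟨fun he => hcl.2 (he ▸ hx), hsub hx⟩
    · rintro ⟨hne, hxl⟩
      by_contra hxp
      have : x ∈ l.cells \ p.cells := Finset.mem_sdiff.mpr ⟨hxl, hxp⟩
      rw [hc, Finset.mem_singleton] at this
      exact hne this
  have hcorner : c ∈ corners l := by
    rw [mem_corners]
    refine ⟨hcl.1, ?_, ?_⟩
    · intro hmem
      have hne : (c.1, c.2 + 1) ≠ c := by
        intro he
        have := congrArg Prod.snd he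
        simp at this
      have h1 : (c.1, c.2 + 1) ∈ p.cells := by
        rw [hpcells]
        exact Finset.mem_erase.mpr ⟨hne, hmem⟩
      have h2 : (c.1, c.2) ∈ p := p.up_left_mem (le_refl _) (by omega) h1
      rw [Prod.mk.eta] at h2
      exact hcl.2 h2
    · intro hmem
      have hne : (c.1 + 1, c.2) ≠ c := by
        intro he
        have := congrArg Prod.fst he
        simp at this
      have h1 : (c.1 + 1, c.2) ∈ p.cells := by
        rw [hpcells]
        exact Finset.mem_erase.mpr ⟨hne, hmem⟩
      have h2 : (c.1, c.2) ∈ p := p.up_left_mem (by omega) (le_refl _) h1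
      rw [Prod.mk.eta] at h2
      exact hcl.2 h2
  refine ⟨c, hcorner, ?_⟩
  apply yd_ext
  rw [eraseCorner_cells hcorner, hpcells]

lemma chain_count_rec (μ l : YoungDiagram) (N : ℕ) (hN : N = l.card - μ.card)
    (hcard : μ.card < l.card) :
    Nat.card {f : Fin (N + 1) → YoungDiagram // ChainProp μ l N f}
      = ∑ c ∈ corners l, skewSYT μ (eraseCorner l c) := by
  classical
  obtain ⟨M, rfl⟩ : ∃ M, N = M + 1 := ⟨N - 1, by omega⟩
  set S := {f : Fin (M + 1 + 1) → YoungDiagram // ChainProp μ l (M + 1) f} with hS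
  haveI : Fintype S := Fintype.ofFinite _
  have key : ∀ x : S, ∃ c, c ∈ corners l ∧ x.1 ⟨M, by omega⟩ = eraseCorner l c :=
    fun x => chain_pen_structure x.1 x.2
  let g : S → ℕ × ℕ := fun x => (key x).choose
  have hg1 : ∀ x : S, g x ∈ corners l := fun x => (key x).choose_spec.1
  have hg2 : ∀ x : S, x.1 ⟨M, by omega⟩ = eraseCorner l (g x) := fun x => (key x).choose_spec.2
  have hgiff : ∀ (x : S) (c : ℕ × ℕ), c ∈ corners l →
      (g x = c ↔ x.1 ⟨M, by omega⟩ = eraseCorner l c) := by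
    intro x c hc
    constructor
    · rintro rfl; exact hg2 x
    · intro hpen
      have h1 := hg2 x
      rw [hpen] at h1
      have hcells := congrArg YoungDiagram.cells h1
      rw [eraseCorner_cells hc, eraseCorner_cells (hg1 x)] at hcells
      have hcl : c ∈ l.cells := (mem_corners.mp hc).1
      by_contra hne
      have h2 : c ∈ l.cells.erase (g x) := Finset.mem_erase.mpr ⟨fun hh => hne hh.symm, hcl⟩
      rw [← hcells] at h2
      exact (Finset.notMem_erase c l.cells) h2
  rw [Nat.card_eq_fintype_card, ← Finset.card_univ]
  rw [Finset.card_eq_sum_card_fiberwise (f := g) (t := corners l)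
    (fun x _ => hg1 x)]
  apply Finset.sum_congr rfl
  intro c hc
  -- fiber card
  have hl' : l.card = (eraseCorner l c).card + 1 := eraseCorner_card hc
  rw [skewSYT_eq]
  have hNc : (eraseCorner l c).card - μ.card = M := by omega
  rw [hNc]
  rw [← Fintype.card_subtype, ← Nat.card_eq_fintype_card]
  apply Nat.card_eq_of_bijective (fun x : {x : S // g x = c} =>
    (⟨fun i => x.1.1 (Fin.castLE (by omega) i),
      chainProp_restrict x.1.2 ((hgiff x.1 c hc).mp x.2)⟩ :
      {f : Fin (M + 1) → YoungDiagram // ChainProp μ (eraseCorner l c) M f}))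
  constructor
  · rintro x₁ x₂ hx
    have hfun := congrArg Subtype.val hx
    apply Subtype.ext; apply Subtype.ext; funext i
    by_cases hi : i.1 < M + 1
    · have hv := congrFun hfun ⟨i.1, hi⟩
      calc x₁.1.1 i = x₁.1.1 (Fin.castLE (by omega) (⟨i.1, hi⟩ : Fin (M + 1))) :=
            fin_congr _ (by simp)
        _ = x₂.1.1 (Fin.castLE (by omega) (⟨i.1, hi⟩ : Fin (M + 1))) := hv
        _ = x₂.1.1 i := fin_congr _ (by simp)
    · have hieq : i = Fin.last (M + 1) := Fin.ext (by have := i.isLt; simp only [Fin.val_last]; omega)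
      rw [hieq, x₁.1.2.2.1, x₂.1.2.2.1]
  · rintro ⟨f, hf⟩
    refine ⟨⟨⟨extendChain l f, chainProp_extend hf (eraseCorner_le l c) hl'⟩, ?_⟩, ?_⟩
    · apply (hgiff _ c hc).mpr
      show extendChain l f ⟨M, by omega⟩ = eraseCorner l c
      rw [extendChain_lt (by simp)]
      rw [← hf.2.1]
      exact fin_congr f (by simp)
    · apply Subtype.ext
      funext i
      show extendChain l f (Fin.castLE (by omega) i) = f i
      rw [extendChain_lt (by have := i.isLt; show i.1 < M + 1; omega)]
      exact fin_congr f (by simp)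

lemma skewSYT_rec {μ l : YoungDiagram} (hcard : μ.card < l.card) :
    skewSYT μ l = ∑ c ∈ corners l, skewSYT μ (eraseCorner l c) := by
  rw [skewSYT_eq]
  exact chain_count_rec μ l _ rfl hcard



/-! ### Module 2: determinant machinery -/

noncomputable def gf (m : ℤ) : ℚ := if 0 ≤ m then ((Nat.factorial m.toNat : ℕ) : ℚ)⁻¹ else 0

lemma gf_zero : gf 0 = 1 := by simp [gf]

lemma gf_neg {m : ℤ} (h : m < 0) : gf m = 0 := by
  rw [gf, if_neg (by omega)]

lemma gf_sub_one (m : ℤ) : gf (m - 1) = m * gf m := by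
  rcases lt_trichotomy m 0 with h | h | h
  · rw [gf_neg (by omega), gf_neg h, mul_zero]
  · subst h; rw [gf_neg (by omega), gf_zero]; simp
  · obtain ⟨t, rfl⟩ : ∃ t : ℕ, m = (t : ℤ) + 1 := ⟨(m - 1).toNat, by omega⟩
    rw [gf, gf, if_pos (by omega), if_pos (by omega)]
    have e1 : ((t : ℤ) + 1 - 1).toNat = t := by omega
    have e2 : ((t : ℤ) + 1).toNat = t + 1 := by omega
    rw [e1, e2, Nat.factorial_succ]
    push_cast
    rw [mul_inv, ← mul_assoc, mul_inv_cancel₀ (by positivity), one_mul]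

noncomputable def Mmat (h : ℕ) (lam : Fin h → ℤ) : Matrix (Fin h) (Fin h) ℚ :=
  Matrix.of fun i j => gf (lam j + (i.1 : ℤ) - (j.1 : ℤ))

lemma sum_det_updateColumn_mul {h : ℕ} (A B : Matrix (Fin h) (Fin h) ℚ) :
    ∑ j, (A.updateCol j (fun i => (B * A) i j)).det = B.trace * A.det := by
  have e : ∀ j, (A.updateCol j (fun i => (B * A) i j)).det
      = (A.adjugate * (B * A)) j j := by
    intro j
    rw [← Matrix.cramer_apply, Matrix.cramer_eq_adjugate_mulVec]
    simp [Matrix.mulVec, Matrix.mul_apply, dotProduct]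
  rw [Finset.sum_congr rfl (fun j _ => e j)]
  have e2 : ∑ j, (A.adjugate * (B * A)) j j = Matrix.trace (A.adjugate * (B * A)) := rfl
  rw [e2, ← Matrix.mul_assoc, Matrix.trace_mul_comm, ← Matrix.mul_assoc,
    Matrix.mul_adjugate, Matrix.smul_mul, Matrix.one_mul, Matrix.trace_smul]
  simp [smul_eq_mul, mul_comm]

lemma Mmat_update_col {h : ℕ} (lam : Fin h → ℤ) (j : Fin h) :
    Mmat h (Function.update lam j (lam j - 1))
      = (Mmat h lam).updateCol j (fun i => gf (lam j - 1 + (i.1 : ℤ) - (j.1 : ℤ))) := by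
  ext i j'
  rw [Matrix.updateCol_apply]
  by_cases hj : j' = j
  · subst hj
    simp [Mmat, Function.update_self]
  · simp [Mmat, Function.update_of_ne hj, hj]

lemma det_sum_update {h : ℕ} (lam : Fin h → ℤ) :
    ∑ j, (Mmat h (Function.update lam j (lam j - 1))).det
      = ((∑ j, lam j : ℤ) : ℚ) * (Mmat h lam).det := by
  classical
  set A := Mmat h lam with hA
  set E : Matrix (Fin h) (Fin h) ℚ := Matrix.diagonal (fun i : Fin h => ((i.1 : ℕ) : ℚ)) with hE
  have hcol : ∀ j : Fin h, (fun i => gf (lam j - 1 + (i.1 : ℤ) - (j.1 : ℤ)))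
      = (((lam j - (j.1 : ℤ) : ℤ) : ℚ) • (fun i => A i j)) + (fun i => (E * A) i j) := by
    intro j
    funext i
    simp only [Pi.add_apply, Pi.smul_apply, smul_eq_mul]
    have harg : lam j - 1 + (i.1 : ℤ) - (j.1 : ℤ) = (lam j + (i.1 : ℤ) - (j.1 : ℤ)) - 1 := by ring
    rw [harg, gf_sub_one]
    have hEA : (E * A) i j = ((i.1 : ℕ) : ℚ) * A i j := by
      rw [hE, Matrix.diagonal_mul]
    rw [hEA]
    have hAij : A i j = gf (lam j + (i.1 : ℤ) - (j.1 : ℤ)) := rfl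
    rw [hAij]
    push_cast
    ring
  have hterm : ∀ j : Fin h, (Mmat h (Function.update lam j (lam j - 1))).det
      = ((lam j - (j.1 : ℤ) : ℤ) : ℚ) * A.det
        + (A.updateCol j (fun i => (E * A) i j)).det := by
    intro j
    rw [show Mmat h (Function.update lam j (lam j - 1))
        = A.updateCol j (fun i => gf (lam j - 1 + (i.1 : ℤ) - (j.1 : ℤ))) from Mmat_update_col lam j]
    rw [hcol j, Matrix.det_updateCol_add, Matrix.det_updateCol_smul,
      Matrix.updateCol_eq_self]
  rw [Finset.sum_congr rfl (fun j _ => hterm j), Finset.sum_add_distrib,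
    sum_det_updateColumn_mul A E]
  rw [hE, Matrix.trace_diagonal]
  rw [← Finset.sum_mul, ← add_mul]
  congr 1
  push_cast
  rw [Finset.sum_sub_distrib]
  ring

lemma det_update_dup {h : ℕ} {lam : Fin h → ℤ} {j j' : Fin h} (hne : j ≠ j')
    (hval : (j'.1 : ℕ) = (j.1 : ℕ) + 1) (heq : lam j = lam j') :
    (Mmat h (Function.update lam j (lam j - 1))).det = 0 := by
  apply Matrix.det_zero_of_column_eq hne
  intro k
  show gf (Function.update lam j (lam j - 1) j + (k.1 : ℤ) - (j.1 : ℤ))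
      = gf (Function.update lam j (lam j - 1) j' + (k.1 : ℤ) - (j'.1 : ℤ))
  rw [Function.update_self, Function.update_of_ne (Ne.symm hne)]
  congr 1
  have hc : ((j'.1 : ℕ) : ℤ) = ((j.1 : ℕ) : ℤ) + 1 := by exact_mod_cast hval
  omega

lemma det_update_lastrow {h : ℕ} {lam : Fin h → ℤ} {j : Fin h}
    (hj : (j.1 : ℕ) = h - 1) (hl : lam j ≤ 0) :
    (Mmat h (Function.update lam j (lam j - 1))).det = 0 := by
  apply Matrix.det_eq_zero_of_column_eq_zero j
  intro i
  show gf (Function.update lam j (lam j - 1) j + (i.1 : ℤ) - (j.1 : ℤ)) = 0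
  rw [Function.update_self]
  apply gf_neg
  have hi : (i.1 : ℕ) < h := i.isLt
  have hjj : (j.1 : ℕ) < h := j.isLt
  omega

lemma det_Mmat_zero (h : ℕ) : (Mmat h (fun _ => 0)).det = 1 := by
  have ht : (Mmat h (fun _ => 0)).BlockTriangular OrderDual.toDual := by
    intro i j hij
    have hlt : i < j := hij
    have hv : (i.1 : ℕ) < (j.1 : ℕ) := hlt
    show gf (0 + (i.1 : ℤ) - (j.1 : ℤ)) = 0
    apply gf_neg
    omega
  rw [Matrix.det_of_lowerTriangular (Mmat h (fun _ => 0)) ht]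
  apply Finset.prod_eq_one
  intro i _
  show gf (0 + (i.1 : ℤ) - (i.1 : ℤ)) = 1
  rw [show (0 + (i.1 : ℤ) - (i.1 : ℤ)) = 0 by ring, gf_zero]

noncomputable def Nmat (h c : ℕ) : Matrix (Fin h) (Fin h) ℚ :=
  Matrix.of fun i j => ∏ t ∈ Finset.range (h - 1 - i.1),
    (((c + (h - 1 - j.1) : ℕ) : ℚ) - (t : ℕ))

lemma gf_fact_prod (L d : ℕ) :
    ((Nat.factorial L : ℕ) : ℚ) * gf ((L : ℤ) - (d : ℤ)) = ∏ t ∈ Finset.range d, ((L : ℚ) - (t : ℕ)) := by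
  rcases le_or_gt d L with hdL | hLd
  · rw [gf, if_pos (by omega)]
    have e1 : ((L : ℤ) - (d : ℤ)).toNat = L - d := by omega
    rw [e1]
    have hcast : ∏ t ∈ Finset.range d, ((L : ℚ) - (t : ℕ))
        = ((L.descFactorial d : ℕ) : ℚ) := by
      rw [Nat.descFactorial_eq_prod_range]
      push_cast
      apply Finset.prod_congr rfl
      intro t ht
      rw [Finset.mem_range] at ht
      rw [Nat.cast_sub (by omega)]
    rw [hcast]
    have hdesc := Nat.factorial_mul_descFactorial hdL
    have hcast2 := congrArg (fun x : ℕ => (x : ℚ)) hdesc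
    push_cast at hcast2
    have hne : ((Nat.factorial (L - d) : ℕ) : ℚ) ≠ 0 := by positivity
    rw [inv_eq_one_div, mul_one_div, div_eq_iff hne, ← hcast2]
    ring
  · rw [gf_neg (by omega), mul_zero]
    symm
    apply Finset.prod_eq_zero (Finset.mem_range.mpr hLd)
    simp

lemma Nmat_det_eq (h c : ℕ) :
    (Nmat h c).det = (∏ j : Fin h, ((Nat.factorial (c + (h - 1 - j.1)) : ℕ) : ℚ))
      * (Mmat h (fun _ => (c : ℤ))).det := by
  have hscale : Nmat h c = Matrix.of (fun i j =>
      ((Nat.factorial (c + (h - 1 - j.1)) : ℕ) : ℚ) * Mmat h (fun _ => (c : ℤ)) i j) := by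
    ext i j
    show (∏ t ∈ Finset.range (h - 1 - i.1), (((c + (h - 1 - j.1) : ℕ) : ℚ) - (t : ℕ)))
        = ((Nat.factorial (c + (h - 1 - j.1)) : ℕ) : ℚ) * gf ((c : ℤ) + (i.1 : ℤ) - (j.1 : ℤ))
    have hi := i.isLt
    have hj := j.isLt
    have harg : ((c : ℤ) + (i.1 : ℤ) - (j.1 : ℤ))
        = (((c + (h - 1 - j.1) : ℕ) : ℤ) - ((h - 1 - i.1 : ℕ) : ℤ)) := by omega
    rw [harg, gf_fact_prod]
  rw [hscale]
  exact Matrix.det_mul_row _ _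

lemma prod_shift (x : ℚ) (d : ℕ) :
    ∏ t ∈ Finset.range (d + 1), (x + 1 - (t : ℕ))
      = ∏ t ∈ Finset.range (d + 1), (x - (t : ℕ))
        + ((d : ℚ) + 1) * ∏ t ∈ Finset.range d, (x - (t : ℕ)) := by
  rw [Finset.prod_range_succ' (fun t => x + 1 - (t : ℕ)) d]
  rw [Finset.prod_range_succ (fun t => x - (t : ℕ)) d]
  have e : ∀ t ∈ Finset.range d, x + 1 - ((t + 1 : ℕ) : ℚ) = x - (t : ℕ) := by
    intro t _; push_cast; ring
  rw [Finset.prod_congr rfl e]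
  push_cast
  ring

lemma Nmat_succ_det (h c : ℕ) : (Nmat h (c + 1)).det = (Nmat h c).det := by
  classical
  set S : Matrix (Fin h) (Fin h) ℚ :=
    Matrix.of (fun i k => if k.1 = i.1 + 1 then ((h - 1 - i.1 : ℕ) : ℚ) else 0) with hS
  have hkey : Nmat h (c + 1) = (1 + S) * Nmat h c := by
    ext i j
    rw [Matrix.add_mul, Matrix.one_mul, Matrix.add_apply]
    have hSN : (S * Nmat h c) i j
        = ∑ k, (if (k.1 : ℕ) = i.1 + 1 then ((h - 1 - i.1 : ℕ) : ℚ) else 0) * Nmat h c k j := by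
      rw [Matrix.mul_apply]
      rfl
    by_cases hi : i.1 + 1 < h
    · have hsum : (S * Nmat h c) i j
          = ((h - 1 - i.1 : ℕ) : ℚ) * Nmat h c ⟨i.1 + 1, hi⟩ j := by
        rw [hSN]
        rw [Finset.sum_eq_single (⟨i.1 + 1, hi⟩ : Fin h)]
        · rw [if_pos rfl]
        · intro b _ hb
          rw [if_neg (fun hh => hb (Fin.ext hh)), zero_mul]
        · intro habs; exact absurd (Finset.mem_univ _) habs
      rw [hsum]
      show (∏ t ∈ Finset.range (h - 1 - i.1), (((c + 1 + (h - 1 - j.1) : ℕ) : ℚ) - (t : ℕ)))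
        = (∏ t ∈ Finset.range (h - 1 - i.1), (((c + (h - 1 - j.1) : ℕ) : ℚ) - (t : ℕ)))
          + ((h - 1 - i.1 : ℕ) : ℚ)
            * ∏ t ∈ Finset.range (h - 1 - (⟨i.1 + 1, hi⟩ : Fin h).1),
                (((c + (h - 1 - j.1) : ℕ) : ℚ) - (t : ℕ))
      obtain ⟨d, hd⟩ : ∃ d, h - 1 - i.1 = d + 1 := ⟨h - 1 - i.1 - 1, by omega⟩
      have hd2 : h - 1 - (⟨i.1 + 1, hi⟩ : Fin h).1 = d := by
        show h - 1 - (i.1 + 1) = d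
        omega
      rw [hd, hd2]
      have hx : ((c + 1 + (h - 1 - j.1) : ℕ) : ℚ) = ((c + (h - 1 - j.1) : ℕ) : ℚ) + 1 := by
        push_cast; ring
      rw [hx, prod_shift]
      congr 2
      push_cast
      ring
    · have hie : h - 1 - i.1 = 0 := by have := i.isLt; omega
      have hsum : (S * Nmat h c) i j = 0 := by
        rw [hSN]
        apply Finset.sum_eq_zero
        intro k _
        rw [if_neg (by have := k.isLt; omega), zero_mul]
      rw [hsum, add_zero]
      have h1 : Nmat h (c + 1) i j = 1 := by
        show (∏ t ∈ Finset.range (h - 1 - i.1), (((c + 1 + (h - 1 - j.1) : ℕ) : ℚ) - (t : ℕ))) = 1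
        rw [hie]
        simp
      have h2 : Nmat h c i j = 1 := by
        show (∏ t ∈ Finset.range (h - 1 - i.1), (((c + (h - 1 - j.1) : ℕ) : ℚ) - (t : ℕ))) = 1
        rw [hie]
        simp
      rw [h1, h2]
  have hdetS : (1 + S).det = 1 := by
    have htri : (1 + S).BlockTriangular id := by
      intro i j hij
      have hij' : (j.1 : ℕ) < (i.1 : ℕ) := hij
      rw [Matrix.add_apply, Matrix.one_apply_ne (by
        intro hh
        rw [hh] at hij'
        exact absurd hij' (lt_irrefl _)), zero_add]
      show (if (j.1 : ℕ) = i.1 + 1 then ((h - 1 - i.1 : ℕ) : ℚ) else 0) = (0 : ℚ)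
      rw [if_neg (by omega)]
    rw [Matrix.det_of_upperTriangular htri]
    apply Finset.prod_eq_one
    intro i _
    rw [Matrix.add_apply, Matrix.one_apply_eq]
    show 1 + (if (i.1 : ℕ) = i.1 + 1 then ((h - 1 - i.1 : ℕ) : ℚ) else 0) = 1
    rw [if_neg (by omega), add_zero]
  rw [hkey, Matrix.det_mul, hdetS, one_mul]

lemma Nmat_zero_det (h : ℕ) :
    (Nmat h 0).det = ∏ i : Fin h, ((Nat.factorial (h - 1 - i.1) : ℕ) : ℚ) := by
  have ht : (Nmat h 0).BlockTriangular OrderDual.toDual := by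
    intro i j hij
    have hlt : i < j := hij
    have hv : (i.1 : ℕ) < (j.1 : ℕ) := hlt
    show (∏ t ∈ Finset.range (h - 1 - i.1), (((0 + (h - 1 - j.1) : ℕ) : ℚ) - (t : ℕ))) = 0
    apply Finset.prod_eq_zero (i := (h - 1 - j.1 : ℕ))
    · rw [Finset.mem_range]
      have hjl := j.isLt
      omega
    · rw [show ((0 + (h - 1 - j.1) : ℕ)) = (h - 1 - j.1 : ℕ) by omega]
      ring
  rw [Matrix.det_of_lowerTriangular (Nmat h 0) ht]
  apply Finset.prod_congr rfl
  intro i _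
  show (∏ t ∈ Finset.range (h - 1 - i.1), (((0 + (h - 1 - i.1) : ℕ) : ℚ) - (t : ℕ))) = _
  rw [show ((0 + (h - 1 - i.1) : ℕ)) = (h - 1 - i.1 : ℕ) by omega]
  have e : ∀ t ∈ Finset.range (h - 1 - i.1),
      (((h - 1 - i.1 : ℕ) : ℚ) - (t : ℕ)) = (((h - 1 - i.1 - t : ℕ) : ℕ) : ℚ) := by
    intro t ht
    rw [Finset.mem_range] at ht
    rw [Nat.cast_sub (show t ≤ h - 1 - i.1 from by omega)]
  rw [Finset.prod_congr rfl e, ← Nat.cast_prod, ← Nat.descFactorial_eq_prod_range,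
    Nat.descFactorial_self]

lemma Nmat_det (h c : ℕ) :
    (Nmat h c).det = ∏ i : Fin h, ((Nat.factorial (h - 1 - i.1) : ℕ) : ℚ) := by
  induction c with
  | zero => exact Nmat_zero_det h
  | succ t ih => rw [Nmat_succ_det, ih]

lemma det_Mmat_const (h c : ℕ) :
    (Mmat h (fun _ => (c : ℤ))).det
      = (∏ i : Fin h, ((Nat.factorial (h - 1 - i.1) : ℕ) : ℚ))
        / (∏ j : Fin h, ((Nat.factorial (c + (h - 1 - j.1)) : ℕ) : ℚ)) := by
  have h1 := Nmat_det_eq h c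
  have h2 := Nmat_det h c
  rw [h2] at h1
  rw [eq_div_iff (by positivity)]
  rw [h1]
  ring

lemma rowLen_ge_of_rect_le {h ℓ : ℕ} {l : YoungDiagram} (hle : rect ℓ h ≤ l)
    {j : ℕ} (hj : j < h) : ℓ ≤ l.rowLen j := by
  rcases Nat.eq_zero_or_pos ℓ with h0 | h0
  · omega
  · have hmem : (j, ℓ - 1) ∈ l := by
      have : (j, ℓ - 1) ∈ (rect ℓ h).cells := by
        rw [YoungDiagram.mem_cells]
        exact mem_rect.mpr ⟨hj, by omega⟩
      exact hle this
    have := YoungDiagram.mem_iff_lt_rowLen.mp hmem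
    omega

theorem skew_formula (h ℓ : ℕ) :
    ∀ (n : ℕ) (l : YoungDiagram), l.card = n → rect ℓ h ≤ l → l.colLen 0 ≤ h →
      (skewSYT (rect ℓ h) l : ℚ)
        = ((Nat.factorial (l.card - ℓ * h) : ℕ) : ℚ)
          * (Mmat h (fun j => (l.rowLen j.1 : ℤ) - (ℓ : ℤ))).det := by
  intro n
  induction n using Nat.strong_induction_on with
  | _ n IH =>
  intro l hln hμl hcol
  have hμcard : (rect ℓ h).card = h * ℓ := rect_card ℓ h
  have hcard_le : (rect ℓ h).card ≤ l.card := Finset.card_le_card hμl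
  rcases eq_or_lt_of_le hcard_le with heq | hlt
  · -- base case : l = rect ℓ h
    have hll : rect ℓ h = l := yd_ext (Finset.eq_of_subset_of_card_le hμl (le_of_eq heq.symm))
    rw [← hll, skewSYT_self]
    rw [show (rect ℓ h).card - ℓ * h = 0 from by rw [hμcard, Nat.mul_comm h ℓ, Nat.sub_self]]
    have hlam : (fun j : Fin h => ((rect ℓ h).rowLen j.1 : ℤ) - (ℓ : ℤ)) = fun _ => (0 : ℤ) := by
      funext j
      rw [rowLen_rect j.isLt]
      ring
    rw [hlam, det_Mmat_zero]
    norm_num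
  · -- recursive case
    have hlt' : (rect ℓ h).card < l.card := hlt
    have hh : 0 < h := by
      obtain ⟨⟨x1, x2⟩, hx⟩ := Finset.card_pos.mp (show 0 < l.card from by omega)
      rw [YoungDiagram.mem_cells] at hx
      have h00 : (0, 0) ∈ l := l.up_left_mem (Nat.zero_le _) (Nat.zero_le _) hx
      have := YoungDiagram.mem_iff_lt_colLen.mp h00
      omega
    set lam : Fin h → ℤ := fun j => (l.rowLen j.1 : ℤ) - (ℓ : ℤ) with hlamdef
    set filt : Finset (Fin h) :=
      Finset.univ.filter (fun j : Fin h => (j.1, l.rowLen j.1 - 1) ∈ corners l) with hfilt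
    have himg : corners l = Finset.image (fun j : Fin h => (j.1, l.rowLen j.1 - 1)) filt := by
      ext c
      rw [hfilt]
      simp only [Finset.mem_image, Finset.mem_filter, Finset.mem_univ, true_and]
      constructor
      · intro hc
        have hcl : c ∈ l := (mem_corners.mp hc).1
        have hc1h : c.1 < h := by
          have hmem : (c.1, 0) ∈ l := l.up_left_mem (le_refl _) (Nat.zero_le _)
            (by rwa [Prod.mk.eta])
          have := YoungDiagram.mem_iff_lt_colLen.mp hmem
          omega
        have hsnd := corner_snd hc
        have hre : (c.1, l.rowLen c.1 - 1) = c := by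
          rw [show l.rowLen c.1 - 1 = c.2 from by omega, Prod.mk.eta]
        exact ⟨⟨c.1, hc1h⟩, by rw [hre]; exact hc, hre⟩
      · rintro ⟨j, hjc, rfl⟩
        exact hjc
    have hinj : ∀ x ∈ filt, ∀ y ∈ filt,
        (fun j : Fin h => (j.1, l.rowLen j.1 - 1)) x = (fun j : Fin h => (j.1, l.rowLen j.1 - 1)) y
          → x = y := by
      intro x _ y _ hxy
      exact Fin.ext (congrArg Prod.fst hxy)
    have hterm : ∀ j ∈ filt,
        (skewSYT (rect ℓ h) (eraseCorner l (j.1, l.rowLen j.1 - 1)) : ℚ)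
          = ((Nat.factorial (l.card - 1 - ℓ * h) : ℕ) : ℚ)
            * (Mmat h (Function.update lam j (lam j - 1))).det := by
      intro j hj
      rw [hfilt, Finset.mem_filter] at hj
      have hjc : (j.1, l.rowLen j.1 - 1) ∈ corners l := hj.2
      have hrow := mem_corners_iff_row.mp hjc
      have hrpos : 0 < l.rowLen j.1 := hrow.1
      have hrge : ℓ ≤ l.rowLen j.1 := rowLen_ge_of_rect_le hμl j.isLt
      have hecard : l.card = (eraseCorner l (j.1, l.rowLen j.1 - 1)).card + 1 :=
        eraseCorner_card hjc
      rcases eq_or_lt_of_le hrge with hcase | hcase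
      · -- rowLen = ℓ : both sides are zero
        have hl1 : 0 < ℓ := by omega
        have hjlast : j.1 = h - 1 := by
          by_contra hne
          have hj1h : j.1 + 1 < h := by have := j.isLt; omega
          have := rowLen_ge_of_rect_le hμl hj1h
          omega
        have hnotle : ¬ rect ℓ h ≤ eraseCorner l (j.1, l.rowLen j.1 - 1) := by
          intro habs
          have hcm : ((j.1, l.rowLen j.1 - 1) : ℕ × ℕ) ∈ (rect ℓ h).cells := by
            rw [YoungDiagram.mem_cells]
            exact mem_rect.mpr ⟨j.isLt, by omega⟩
          have := habs hcm
          rw [← YoungDiagram.mem_cells, eraseCorner_cells hjc] at this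
          exact (Finset.notMem_erase _ _) this
        have hlam0 : lam j ≤ 0 := by
          rw [hlamdef]
          simp only
          omega
        rw [skewSYT_of_not_le hnotle, det_update_lastrow hjlast hlam0]
        simp
      · -- rowLen > ℓ : use IH
        have hμ'l : rect ℓ h ≤ eraseCorner l (j.1, l.rowLen j.1 - 1) := by
          intro x hx
          obtain ⟨hx1, hx2⟩ := mem_rect.mp hx
          rw [← YoungDiagram.mem_cells, eraseCorner_cells hjc, Finset.mem_erase]
          refine ⟨?_, hμl (mem_rect.mpr ⟨hx1, hx2⟩)⟩
          intro habs
          have := congrArg Prod.snd habs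
          simp only at this
          omega
        have hcol' : (eraseCorner l (j.1, l.rowLen j.1 - 1)).colLen 0 ≤ h :=
          le_trans (colLen_le_of_le (eraseCorner_le l _) 0) hcol
        have hIH := IH (eraseCorner l (j.1, l.rowLen j.1 - 1)).card (by omega)
          (eraseCorner l (j.1, l.rowLen j.1 - 1)) rfl hμ'l hcol'
        rw [hIH]
        have hlam' : (fun j' : Fin h =>
            ((eraseCorner l (j.1, l.rowLen j.1 - 1)).rowLen j'.1 : ℤ) - (ℓ : ℤ))
              = Function.update lam j (lam j - 1) := by
          funext j'
          rw [rowLen_eraseCorner hjc j'.1]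
          by_cases hjj : j' = j
          · subst hjj
            rw [if_pos rfl, Function.update_self, hlamdef]
            simp only
            omega
          · rw [if_neg (fun hh => hjj (Fin.ext hh)),
              Function.update_of_ne hjj, hlamdef]
        rw [hlam']
        rw [show (eraseCorner l (j.1, l.rowLen j.1 - 1)).card - ℓ * h = l.card - 1 - ℓ * h
          from by omega]
    have hzero : ∀ j ∈ (Finset.univ : Finset (Fin h)), j ∉ filt →
        (((Nat.factorial (l.card - 1 - ℓ * h) : ℕ) : ℚ)
          * (Mmat h (Function.update lam j (lam j - 1))).det) = 0 := by
      intro j _ hj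
      rw [hfilt, Finset.mem_filter] at hj
      have hnc : ¬ ((j.1, l.rowLen j.1 - 1) ∈ corners l) := fun hcc => hj ⟨Finset.mem_univ _, hcc⟩
      rw [mem_corners_iff_row] at hnc
      have hanti := l.rowLen_anti j.1 (j.1 + 1) (by omega)
      by_cases hj1 : j.1 + 1 < h
      · -- duplicate columns
        have hreq : l.rowLen (j.1 + 1) = l.rowLen j.1 := by omega
        have hdup := det_update_dup (lam := lam) (j := j) (j' := ⟨j.1 + 1, hj1⟩)
          (by intro hh; have := congrArg Fin.val hh; simp only at this; omega)
          (by simp only)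
          (by rw [hlamdef]; simp only; rw [hreq])
        rw [hdup, mul_zero]
      · -- last row, rowLen = 0
        have hjlast : j.1 = h - 1 := by have := j.isLt; omega
        have hr0 : l.rowLen (j.1 + 1) = 0 := rowLen_eq_zero hcol (by omega)
        have hrj0 : l.rowLen j.1 = 0 := by omega
        have hlam0 : lam j ≤ 0 := by rw [hlamdef]; simp only; omega
        rw [det_update_lastrow hjlast hlam0, mul_zero]
    have hsumlam : ((∑ j, lam j : ℤ) : ℚ) = ((l.card - ℓ * h : ℕ) : ℚ) := by
      have h1 : ∑ j, lam j = (∑ i ∈ Finset.range h, (l.rowLen i : ℤ)) - (h : ℤ) * (ℓ : ℤ) := by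
        rw [hlamdef, Finset.sum_sub_distrib]
        congr 1
        · exact Fin.sum_univ_eq_sum_range (fun i => (l.rowLen i : ℤ)) h
        · rw [Finset.sum_const, Finset.card_univ, Fintype.card_fin, nsmul_eq_mul]
      have h2 : (∑ i ∈ Finset.range h, (l.rowLen i : ℤ)) = (l.card : ℤ) := by
        rw [card_eq_sum_rowLen hcol]
        push_cast
        rfl
      have hle2 : ℓ * h ≤ l.card := by rw [Nat.mul_comm]; omega
      have hmul : ((ℓ * h : ℕ) : ℤ) = (h : ℤ) * (ℓ : ℤ) := by push_cast; ring
      have h3 : ((l.card - ℓ * h : ℕ) : ℤ) = ∑ j, lam j := by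
        rw [h1, h2]
        omega
      rw [← h3]
      push_cast
      ring
    rw [skewSYT_rec hlt', Nat.cast_sum]
    calc (∑ c ∈ corners l, (skewSYT (rect ℓ h) (eraseCorner l c) : ℚ))
        = ∑ j ∈ filt, (skewSYT (rect ℓ h) (eraseCorner l (j.1, l.rowLen j.1 - 1)) : ℚ) := by
          rw [himg, Finset.sum_image hinj]
      _ = ∑ j ∈ filt, (((Nat.factorial (l.card - 1 - ℓ * h) : ℕ) : ℚ)
            * (Mmat h (Function.update lam j (lam j - 1))).det) := Finset.sum_congr rfl hterm
      _ = ∑ j : Fin h, (((Nat.factorial (l.card - 1 - ℓ * h) : ℕ) : ℚ)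
            * (Mmat h (Function.update lam j (lam j - 1))).det) :=
          Finset.sum_subset (Finset.subset_univ _) hzero
      _ = ((Nat.factorial (l.card - 1 - ℓ * h) : ℕ) : ℚ)
            * (((∑ j, lam j : ℤ)) : ℚ) * (Mmat h lam).det := by
          rw [← Finset.mul_sum, det_sum_update]
          ring
      _ = ((Nat.factorial (l.card - ℓ * h) : ℕ) : ℚ) * (Mmat h lam).det := by
          have hmm : ℓ * h < l.card := by rw [Nat.mul_comm]; omega
          rw [hsumlam]
          rw [show l.card - 1 - ℓ * h = (l.card - ℓ * h) - 1 from by omega]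
          congr 1
          rw [mul_comm, ← Nat.cast_mul, Nat.mul_factorial_pred (by omega)]


/-! ### Module 4: analytic estimates -/

lemma pow_le_exp_mul_factorial (m : ℕ) :
    ((m : ℝ)) ^ m ≤ Real.exp 1 ^ m * (Nat.factorial m : ℝ) := by
  induction m with
  | zero => simp
  | succ t ih =>
    have he : (0 : ℝ) < Real.exp 1 := Real.exp_pos 1
    have h1 : ((t : ℝ) + 1) ^ t ≤ Real.exp 1 * (t : ℝ) ^ t := by
      rcases Nat.eq_zero_or_pos t with h0 | h0
      · subst h0
        have h1e : (1 : ℝ) ≤ Real.exp 1 := Real.one_le_exp (by norm_num)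
        simpa using h1e
      · have ht : (0 : ℝ) < t := by exact_mod_cast h0
        have hh := Real.add_one_le_exp (1 / (t : ℝ))
        have hpow : ((1 : ℝ) + 1 / t) ^ t ≤ (Real.exp (1 / (t : ℝ))) ^ t := by
          apply pow_le_pow_left₀ (by positivity) (by linarith)
        have hexp : (Real.exp (1 / (t : ℝ))) ^ t = Real.exp 1 := by
          rw [← Real.exp_nat_mul]
          congr 1
          field_simp
        calc ((t : ℝ) + 1) ^ t = ((t : ℝ) * (1 + 1 / t)) ^ t := by
              congr 1
              field_simp
          _ = (t : ℝ) ^ t * (1 + 1 / t) ^ t := mul_pow _ _ _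
          _ ≤ (t : ℝ) ^ t * Real.exp 1 := by
              apply mul_le_mul_of_nonneg_left (hpow.trans (le_of_eq hexp)) (by positivity)
          _ = Real.exp 1 * (t : ℝ) ^ t := mul_comm _ _
    have hstep : ((t : ℝ) + 1) ^ (t + 1) ≤ Real.exp 1 ^ (t + 1) * ((t + 1) * (Nat.factorial t : ℝ)) := by
      calc ((t : ℝ) + 1) ^ (t + 1) = ((t : ℝ) + 1) * ((t : ℝ) + 1) ^ t := by ring
        _ ≤ ((t : ℝ) + 1) * (Real.exp 1 * (t : ℝ) ^ t) := by
            apply mul_le_mul_of_nonneg_left h1 (by positivity)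
        _ ≤ ((t : ℝ) + 1) * (Real.exp 1 * (Real.exp 1 ^ t * (Nat.factorial t : ℝ))) := by
            apply mul_le_mul_of_nonneg_left (mul_le_mul_of_nonneg_left ih (le_of_lt he))
              (by positivity)
        _ = Real.exp 1 ^ (t + 1) * (((t : ℝ) + 1) * (Nat.factorial t : ℝ)) := by ring
    have e1 : ((t + 1 : ℕ) : ℝ) = (t : ℝ) + 1 := by push_cast; ring
    have e2 : ((Nat.factorial (t + 1) : ℕ) : ℝ) = ((t : ℝ) + 1) * (Nat.factorial t : ℝ) := by
      rw [Nat.factorial_succ]; push_cast; ring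
    rw [e1, e2]
    exact hstep

lemma descFactorial_ge {a ℓ : ℕ} (hla : ℓ ≤ a) :
    ((a : ℝ) / Real.exp 1) ^ ℓ ≤ (a.descFactorial ℓ : ℝ) := by
  rcases Nat.eq_zero_or_pos ℓ with h0 | h0
  · subst h0; simp
  · have hl0 : (0 : ℝ) < ℓ := by exact_mod_cast h0
    have ha0 : (0 : ℝ) < a := by
      have : 0 < a := by omega
      exact_mod_cast this
    have he : (0 : ℝ) < Real.exp 1 := Real.exp_pos 1
    have hfℓ : ∏ t ∈ Finset.range ℓ, ((ℓ : ℝ) - t) = (Nat.factorial ℓ : ℝ) := by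
      have e : ∀ t ∈ Finset.range ℓ, ((ℓ : ℝ) - t) = ((ℓ - t : ℕ) : ℝ) := by
        intro t ht
        rw [Finset.mem_range] at ht
        rw [Nat.cast_sub (show t ≤ ℓ from by omega)]
      rw [Finset.prod_congr rfl e, ← Nat.cast_prod, ← Nat.descFactorial_eq_prod_range,
        Nat.descFactorial_self]
    have hfa : ∏ t ∈ Finset.range ℓ, ((a : ℝ) - t) = (a.descFactorial ℓ : ℝ) := by
      have e : ∀ t ∈ Finset.range ℓ, ((a : ℝ) - t) = ((a - t : ℕ) : ℝ) := by
        intro t ht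
        rw [Finset.mem_range] at ht
        rw [Nat.cast_sub (show t ≤ a from by omega)]
      rw [Finset.prod_congr rfl e, ← Nat.cast_prod, ← Nat.descFactorial_eq_prod_range]
    have hprodle : ∏ t ∈ Finset.range ℓ, ((a : ℝ) * ((ℓ : ℝ) - t))
        ≤ ∏ t ∈ Finset.range ℓ, ((ℓ : ℝ) * ((a : ℝ) - t)) := by
      apply Finset.prod_le_prod
      · intro t ht
        rw [Finset.mem_range] at ht
        have ht' : (t : ℝ) < ℓ := by exact_mod_cast ht
        nlinarith
      · intro t ht
        rw [Finset.mem_range] at ht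
        have ht' : (t : ℝ) < ℓ := by exact_mod_cast ht
        have hla' : (ℓ : ℝ) ≤ a := by exact_mod_cast hla
        nlinarith
    have hstep2 : (a : ℝ) ^ ℓ * (Nat.factorial ℓ : ℝ) ≤ (ℓ : ℝ) ^ ℓ * (a.descFactorial ℓ : ℝ) := by
      have e1 : (a : ℝ) ^ ℓ * (Nat.factorial ℓ : ℝ)
          = ∏ t ∈ Finset.range ℓ, ((a : ℝ) * ((ℓ : ℝ) - t)) := by
        rw [Finset.prod_mul_distrib, Finset.prod_const, Finset.card_range, hfℓ]
      have e2 : (ℓ : ℝ) ^ ℓ * (a.descFactorial ℓ : ℝ)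
          = ∏ t ∈ Finset.range ℓ, ((ℓ : ℝ) * ((a : ℝ) - t)) := by
        rw [Finset.prod_mul_distrib, Finset.prod_const, Finset.card_range, hfa]
      rw [e1, e2]
      exact hprodle
    have hstep1 := pow_le_exp_mul_factorial ℓ
    have hdesc0 : (0 : ℝ) ≤ (a.descFactorial ℓ : ℝ) := by positivity
    have hfac0 : (0 : ℝ) < (Nat.factorial ℓ : ℝ) := by
      have := Nat.factorial_pos ℓ
      exact_mod_cast this
    rw [div_pow, div_le_iff₀ (by positivity)]
    nlinarith [mul_le_mul_of_nonneg_right hstep1 hdesc0]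

lemma nat_descFactorial_pos {n k : ℕ} (h : k ≤ n) : 0 < n.descFactorial k := by
  apply Nat.pos_of_ne_zero
  intro h0
  have := Nat.factorial_mul_descFactorial h
  rw [h0, Nat.mul_zero] at this
  exact absurd this.symm (Nat.factorial_ne_zero n)

/-! ### Module 5: the main theorem -/

lemma maxHook_rect {a b : ℕ} (ha : 0 < a) (hb : 0 < b) : maxHook (rect a b) = a + b - 1 := by
  rw [maxHook, rowLen_rect hb, colLen_rect ha]

theorem skew_dim_lower_wide' (n k st h ℓ : ℕ) (hn : 1 ≤ n) (hk1 : 1 ≤ k) (hkn : k ≤ n)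
    (hh : 1 ≤ h) (hℓ : 1 ≤ ℓ) (hns : n = st * h) (hkl : k = ℓ * h)
    (hst : Real.sqrt (n : ℝ) ≤ (st : ℝ)) (hhk : (h : ℝ) ≤ Real.sqrt (k : ℝ)) :
    (2 * Real.exp 1)⁻¹ ^ k * ((maxHook (rect st h) : ℝ) / (n : ℝ)) ^ k ≤
      (skewSYT (rect ℓ h) (rect st h) : ℝ) / (dim (rect st h) : ℝ) := by
  have he : (0 : ℝ) < Real.exp 1 := Real.exp_pos 1
  have hst1 : 1 ≤ st := by
    rcases Nat.eq_zero_or_pos st with h0 | h0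
    · subst h0; simp at hns; omega
    · exact h0
  have hhl : h ≤ ℓ := by
    have hk0 : (0 : ℝ) ≤ (k : ℝ) := by positivity
    have h2 : (h : ℝ) * h ≤ (k : ℝ) := by
      nlinarith [Real.sq_sqrt hk0, Real.sqrt_nonneg (k : ℝ)]
    have h2' : h * h ≤ k := by exact_mod_cast h2
    rw [hkl] at h2'
    exact Nat.le_of_mul_le_mul_right h2' (by omega)
  have hla : ℓ ≤ st := by
    have h1 : ℓ * h ≤ st * h := by rw [← hkl, ← hns]; exact hkn
    exact Nat.le_of_mul_le_mul_right h1 (by omega)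
  have hhst : h ≤ st := le_trans hhl hla
  have hn0 : (0 : ℝ) < n := by exact_mod_cast hn
  -- exact formulas
  have hcolA : (rect st h).colLen 0 = h := colLen_rect (by omega)
  have hcardA : (rect st h).card = h * st := rect_card st h
  have hns' : n = h * st := by rw [hns, Nat.mul_comm]
  have hdim : (dim (rect st h) : ℚ) = ((Nat.factorial n : ℕ) : ℚ)
      * (Mmat h (fun _ => (st : ℤ))).det := by
    have hdimf := skew_formula h 0 ((rect st h).card) (rect st h) rfl
      (by rw [rect_zero]; exact bot_le) (le_of_eq hcolA)
    have hfun : (fun j : Fin h => (((rect st h).rowLen j.1 : ℕ) : ℤ) - ((0 : ℕ) : ℤ))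
        = fun _ : Fin h => (st : ℤ) := by
      funext j
      rw [rowLen_rect j.isLt]
      simp
    rw [dim, ← rect_zero h, hdimf, hfun,
      show (rect st h).card - 0 * h = n from by rw [hcardA]; omega]
  have hskew : (skewSYT (rect ℓ h) (rect st h) : ℚ) = ((Nat.factorial (n - k) : ℕ) : ℚ)
      * (Mmat h (fun _ => ((st - ℓ : ℕ) : ℤ))).det := by
    have hskewf := skew_formula h ℓ ((rect st h).card) (rect st h) rfl
      (rect_le_rect hla) (le_of_eq hcolA)
    have hfun : (fun j : Fin h => (((rect st h).rowLen j.1 : ℕ) : ℤ) - ((ℓ : ℕ) : ℤ))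
        = fun _ : Fin h => ((st - ℓ : ℕ) : ℤ) := by
      funext j
      rw [rowLen_rect j.isLt]
      omega
    rw [hskewf, hfun,
      show (rect st h).card - ℓ * h = n - k from by rw [hcardA, hkl, hns']]
  rw [det_Mmat_const] at hdim hskew
  -- real versions
  have hdimR : (dim (rect st h) : ℝ) = (Nat.factorial n : ℝ)
      * ((∏ i : Fin h, (Nat.factorial (h - 1 - i.1) : ℝ))
        / (∏ j : Fin h, (Nat.factorial (st + (h - 1 - j.1)) : ℝ))) := by
    have := congrArg (fun q : ℚ => (q : ℝ)) hdim
    push_cast at this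
    exact this
  have hskewR : (skewSYT (rect ℓ h) (rect st h) : ℝ) = (Nat.factorial (n - k) : ℝ)
      * ((∏ i : Fin h, (Nat.factorial (h - 1 - i.1) : ℝ))
        / (∏ j : Fin h, (Nat.factorial ((st - ℓ) + (h - 1 - j.1)) : ℝ))) := by
    have := congrArg (fun q : ℚ => (q : ℝ)) hskew
    push_cast at this
    exact this
  set WR := ∏ i : Fin h, (Nat.factorial (h - 1 - i.1) : ℝ) with hWR
  set PaR := ∏ j : Fin h, (Nat.factorial (st + (h - 1 - j.1)) : ℝ) with hPaR
  set PbR := ∏ j : Fin h, (Nat.factorial ((st - ℓ) + (h - 1 - j.1)) : ℝ) with hPbR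
  have hWR0 : (0 : ℝ) < WR := by
    rw [hWR]; apply Finset.prod_pos; intro i _
    exact_mod_cast Nat.factorial_pos _
  have hPaR0 : (0 : ℝ) < PaR := by
    rw [hPaR]; apply Finset.prod_pos; intro i _
    exact_mod_cast Nat.factorial_pos _
  have hPbR0 : (0 : ℝ) < PbR := by
    rw [hPbR]; apply Finset.prod_pos; intro i _
    exact_mod_cast Nat.factorial_pos _
  have hfn0 : (0 : ℝ) < (Nat.factorial n : ℝ) := by exact_mod_cast Nat.factorial_pos n
  have hfnk0 : (0 : ℝ) < (Nat.factorial (n - k) : ℝ) := by exact_mod_cast Nat.factorial_pos (n - k)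
  have hratio : (skewSYT (rect ℓ h) (rect st h) : ℝ) / (dim (rect st h) : ℝ)
      = ((Nat.factorial (n - k) : ℝ) * PaR) / ((Nat.factorial n : ℝ) * PbR) := by
    rw [hskewR, hdimR]
    field_simp
  rw [hratio]
  -- decompose PaR
  set DR := ∏ j : Fin h, ((st + (h - 1 - j.1)).descFactorial ℓ : ℝ) with hDRdef
  have hPa_split : PaR = PbR * DR := by
    rw [hPaR, hPbR, hDRdef, ← Finset.prod_mul_distrib]
    apply Finset.prod_congr rfl
    intro j _
    have hfd := Nat.factorial_mul_descFactorial (show ℓ ≤ st + (h - 1 - j.1) from by omega)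
    rw [show st + (h - 1 - j.1) - ℓ = (st - ℓ) + (h - 1 - j.1) from by omega] at hfd
    exact_mod_cast hfd.symm
  have hfact_split : (Nat.factorial n : ℝ)
      = (Nat.factorial (n - k) : ℝ) * (n.descFactorial k : ℝ) := by
    exact_mod_cast (Nat.factorial_mul_descFactorial hkn).symm
  have hdescn0 : (0 : ℝ) < (n.descFactorial k : ℝ) := by
    exact_mod_cast nat_descFactorial_pos hkn
  have hDR_lb : ((st : ℝ) / Real.exp 1) ^ k ≤ DR := by
    have hconst : ((st : ℝ) / Real.exp 1) ^ k = ∏ _j : Fin h, ((st : ℝ) / Real.exp 1) ^ ℓ := by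
      rw [Finset.prod_const, Finset.card_univ, Fintype.card_fin, ← pow_mul, hkl]
    rw [hconst, hDRdef]
    apply Finset.prod_le_prod
    · intro j _; positivity
    · intro j _
      calc ((st : ℝ) / Real.exp 1) ^ ℓ ≤ (st.descFactorial ℓ : ℝ) := descFactorial_ge hla
        _ ≤ ((st + (h - 1 - j.1)).descFactorial ℓ : ℝ) := by
            exact_mod_cast Nat.descFactorial_le ℓ (Nat.le_add_right _ _)
  have hdesc_ub : (n.descFactorial k : ℝ) ≤ (n : ℝ) ^ k := by
    exact_mod_cast Nat.descFactorial_le_pow n k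
  -- final chain
  have hmaxhook : maxHook (rect st h) = st + h - 1 := maxHook_rect (by omega) (by omega)
  rw [hmaxhook]
  have hs2 : ((st + h - 1 : ℕ) : ℝ) ≤ 2 * st := by
    have hs2' : st + h - 1 ≤ 2 * st := by omega
    calc ((st + h - 1 : ℕ) : ℝ) ≤ ((2 * st : ℕ) : ℝ) := by exact_mod_cast hs2'
      _ = 2 * st := by push_cast; ring
  have hbase : (2 * Real.exp 1)⁻¹ * (((st + h - 1 : ℕ) : ℝ) / (n : ℝ))
      ≤ ((st : ℝ) / Real.exp 1) / (n : ℝ) := by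
    rw [inv_mul_eq_div, div_div, div_div]
    rw [div_le_div_iff₀ (by positivity) (by positivity)]
    nlinarith [mul_le_mul_of_nonneg_right hs2 (le_of_lt (mul_pos he hn0))]
  have hL : (2 * Real.exp 1)⁻¹ ^ k * (((st + h - 1 : ℕ) : ℝ) / (n : ℝ)) ^ k
      ≤ ((st : ℝ) / Real.exp 1) ^ k / (n : ℝ) ^ k := by
    rw [← mul_pow, ← div_pow]
    apply pow_le_pow_left₀ (by positivity) hbase
  refine le_trans hL ?_
  rw [hPa_split, hfact_split]
  have hre : ((Nat.factorial (n - k) : ℝ) * (PbR * DR))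
      / (((Nat.factorial (n - k) : ℝ) * (n.descFactorial k : ℝ)) * PbR)
        = DR / (n.descFactorial k : ℝ) := by
    field_simp
  rw [hre]
  exact div_le_div₀ (by positivity) hDR_lb hdescn0 hdesc_ub




/-- sharpness example, wide rectangles: `λ = [s̃^h]`, `μ = [ℓ^h]`. -/
theorem skew_dim_lower_wide (n k st h ℓ : ℕ) (hn : 1 ≤ n) (hk1 : 1 ≤ k) (hkn : k ≤ n)
    (hh : 1 ≤ h) (hℓ : 1 ≤ ℓ) (hns : n = st * h) (hkl : k = ℓ * h)
    (hst : Real.sqrt (n : ℝ) ≤ (st : ℝ)) (hhk : (h : ℝ) ≤ Real.sqrt (k : ℝ)) :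
    (2 * Real.exp 1)⁻¹ ^ k * ((maxHook (rect st h) : ℝ) / (n : ℝ)) ^ k ≤
      (skewSYT (rect ℓ h) (rect st h) : ℝ) / (dim (rect st h) : ℝ) := by
  exact skew_dim_lower_wide' n k st h ℓ hn hk1 hkn hh hℓ hns hkl hst hhk

end ThickHookPaper
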